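/- The undirected graph N with vertex set {x, y, p, q, u, v} and edge set {xp, pv, pu, uv, uq, vq, qy} is an unrooted phylogenetic network with leaf set {x, y} that is tree-based but not forest-based: its only spanning trees with leaf set {x, y} are the paths x, p, v, u, q, y and x, p, u, v, q, y, neither of which is an induced path of N. -/

import Mathlib

/-!
Unrooted phylogenetic networks: simple, connected, undirected graphs with
nonempty leaf set and no degree-2 vertices, formalized via `SimpleGraph`.
-/

namespace Paper

variable {V : Type*}

/-- The leaf set of an undirected graph: its vertices of degree 1. -/
def leafSet (G : SimpleGraph V) : Set V := {v : V | (G.neighborSet v).ncard = 1}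

/-- `G` is an unrooted phylogenetic network: a simple, connected, undirected
graph with nonempty leaf set and no vertex of degree 2. -/
def IsUPN (G : SimpleGraph V) : Prop :=
  G.Connected ∧ (leafSet G).Nonempty ∧ ∀ v : V, (G.neighborSet v).ncard ≠ 2

/-- `G` is forest-based: it contains a spanning forest `F` (an acyclic spanning
subgraph) whose set of vertices of degree at most 1 is exactly `leafSet G`, and
such that every edge of `G` has its two ends in different connected components
of `F` (i.e. each tree of `F` is an induced subgraph of `G`). -/
def ForestBasedU (G : SimpleGraph V) : Prop :=
  ∃ F : SimpleGraph V, F ≤ G ∧ F.IsAcyclic ∧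
    {v : V | (F.neighborSet v).ncard ≤ 1} = leafSet G ∧
    ∀ u v : V, G.Adj u v → ¬ F.Adj u v → ¬ F.Reachable u v

/-- `G` is tree-based: it contains a spanning tree (a connected acyclic
spanning subgraph) whose set of degree-1 vertices is exactly `leafSet G`. -/
def TreeBasedU (G : SimpleGraph V) : Prop :=
  ∃ T : SimpleGraph V, T ≤ G ∧ T.Connected ∧ T.IsAcyclic ∧
    {v : V | (T.neighborSet v).ncard = 1} = leafSet G

/-- An (undirected) path in `G`: a nonempty list of pairwise distinct vertices,
consecutive ones joined by edges. -/
def UPath (G : SimpleGraph V) (p : List V) : Prop :=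
  p ≠ [] ∧ p.Nodup ∧ p.Chain' G.Adj

/-- An induced path in `G`: a path whose vertex set induces no edges other than
the consecutive edges of the path. -/
def UInducedPath (G : SimpleGraph V) (p : List V) : Prop :=
  UPath G p ∧ ∀ i j : Fin p.length, G.Adj (p.get i) (p.get j) →
    (j : ℕ) = (i : ℕ) + 1 ∨ (i : ℕ) = (j : ℕ) + 1

/-- The path `p` intersects the leaf set of `G` precisely in its two (distinct)
end vertices. -/
def MeetsLeavesExactlyAtEnds (G : SimpleGraph V) (p : List V) : Prop :=
  ∃ a b : V, p.head? = some a ∧ p.getLast? = some b ∧ a ≠ b ∧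
    a ∈ leafSet G ∧ b ∈ leafSet G ∧
    ∀ v ∈ p, v ∈ leafSet G → v = a ∨ v = b

/-- The example network on vertex set `{x, y, p, q, u, v}` (encoded as
`x = 0, y = 1, p = 2, q = 3, u = 4, v = 5` in `Fin 6`) with edge set
`{xp, pv, pu, uv, uq, vq, qy}`. -/
def exG : SimpleGraph (Fin 6) :=
  SimpleGraph.fromRel fun a b =>
    (a, b) ∈ [((0 : Fin 6), (2 : Fin 6)), (2, 5), (2, 4), (4, 5), (4, 3),
      (5, 3), (3, 1)]

/-- The graph of the path `x, p, v, u, q, y`. -/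
def exT₁ : SimpleGraph (Fin 6) :=
  SimpleGraph.fromRel fun a b =>
    (a, b) ∈ [((0 : Fin 6), (2 : Fin 6)), (2, 5), (5, 4), (4, 3), (3, 1)]

/-- The graph of the path `x, p, u, v, q, y`. -/
def exT₂ : SimpleGraph (Fin 6) :=
  SimpleGraph.fromRel fun a b =>
    (a, b) ∈ [((0 : Fin 6), (2 : Fin 6)), (2, 4), (4, 5), (5, 3), (3, 1)]


open SimpleGraph

instance : DecidableRel exG.Adj := fun a b =>
  decidable_of_iff' _ (SimpleGraph.fromRel_adj _ a b)
instance : DecidableRel exT₁.Adj := fun a b =>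
  decidable_of_iff' _ (SimpleGraph.fromRel_adj _ a b)
instance : DecidableRel exT₂.Adj := fun a b =>
  decidable_of_iff' _ (SimpleGraph.fromRel_adj _ a b)
instance instFESAdj {W : Type*} [DecidableEq W] (s : Set (Sym2 W)) [DecidablePred (· ∈ s)] :
    DecidableRel (fromEdgeSet s).Adj := fun a b =>
  decidable_of_iff (s(a,b) ∈ s ∧ a ≠ b) (fromEdgeSet_adj s).symm

lemma ncard_eq_degree {W : Type*} [Fintype W] (G : SimpleGraph W) [DecidableRel G.Adj] (v : W) :
    (G.neighborSet v).ncard = G.degree v := by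
  rw [← SimpleGraph.card_neighborSet_eq_degree, Set.ncard_eq_toFinset_card', Set.toFinset_card]

lemma leafSet_exG : leafSet exG = {0, 1} := by
  ext v
  simp only [leafSet, Set.mem_setOf_eq, ncard_eq_degree, Set.mem_insert_iff,
    Set.mem_singleton_iff]
  revert v; decide

lemma cycle3 {W : Type*} {G : SimpleGraph W} {a b c : W} (hab : G.Adj a b) (hbc : G.Adj b c)
    (hca : G.Adj c a) : ¬ G.IsAcyclic := fun hA =>
  hA (Walk.cons hab (Walk.cons hbc (Walk.cons hca Walk.nil))) (by
    have h1 := hab.ne; have h2 := hbc.ne; have h3 := hca.ne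
    simp [Walk.isCycle_def, Walk.isTrail_def, Sym2.eq_iff]
    aesop)

lemma cycle4 {W : Type*} {G : SimpleGraph W} {a b c d : W} (hab : G.Adj a b) (hbc : G.Adj b c)
    (hcd : G.Adj c d) (hda : G.Adj d a) (hac : a ≠ c) (hbd : b ≠ d) : ¬ G.IsAcyclic := fun hA =>
  hA (Walk.cons hab (Walk.cons hbc (Walk.cons hcd (Walk.cons hda Walk.nil)))) (by
    have h1 := hab.ne; have h2 := hbc.ne; have h3 := hcd.ne; have h4 := hda.ne
    simp [Walk.isCycle_def, Walk.isTrail_def, Sym2.eq_iff]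
    aesop)

lemma ncard_le_one {W : Type*} (F : SimpleGraph W) (t w1 w2 w3 : W)
    (hnb : ∀ w, F.Adj t w → w = w1 ∨ w = w2 ∨ w = w3)
    (h1 : ¬F.Adj t w1) (h2 : ¬F.Adj t w2) : (F.neighborSet t).ncard ≤ 1 := by
  have hsub : F.neighborSet t ⊆ {w3} := by
    intro w hw
    rcases hnb w hw with rfl | rfl | rfl
    · exact absurd hw h1
    · exact absurd hw h2
    · rfl
  calc (F.neighborSet t).ncard ≤ ({w3} : Set W).ncard :=
        Set.ncard_le_ncard hsub (Set.finite_singleton w3)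
    _ = 1 := Set.ncard_singleton w3

lemma atLeastTwo {W : Type*} (F : SimpleGraph W) (t w1 w2 w3 : W)
    (hnb : ∀ w, F.Adj t w → w = w1 ∨ w = w2 ∨ w = w3)
    (h : ¬ (F.neighborSet t).ncard ≤ 1) :
    (F.Adj t w1 ∧ F.Adj t w2) ∨ (F.Adj t w1 ∧ F.Adj t w3) ∨ (F.Adj t w2 ∧ F.Adj t w3) := by
  by_cases h1 : F.Adj t w1 <;> by_cases h2 : F.Adj t w2 <;> by_cases h3 : F.Adj t w3 <;>
    first
      | (left; exact ⟨h1, h2⟩)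
      | (right; left; exact ⟨h1, h3⟩)
      | (right; right; exact ⟨h2, h3⟩)
      | (exfalso; apply h; first
          | exact ncard_le_one F t w1 w2 w3 hnb h1 h2
          | exact ncard_le_one F t w1 w3 w2 (fun w hw => (hnb w hw).imp id Or.symm) h1 h3
          | exact ncard_le_one F t w2 w3 w1
              (fun w hw => by rcases hnb w hw with h | h | h <;> tauto) h2 h3)

lemma exists_adj_of_reachable {W : Type*} {G : SimpleGraph W} {u v : W}
    (h : G.Reachable u v) (hne : u ≠ v) : ∃ w, G.Adj u w := by
  obtain ⟨p⟩ := h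
  cases p with
  | nil => exact absurd rfl hne
  | cons h _ => exact ⟨_, h⟩

lemma exG_conn : exG.Connected := by
  rw [connected_iff]; exact ⟨by decide, ⟨0⟩⟩

lemma exT₁_conn : exT₁.Connected := by
  rw [connected_iff]; exact ⟨by decide, ⟨0⟩⟩

lemma exT₂_conn : exT₂.Connected := by
  rw [connected_iff]; exact ⟨by decide, ⟨0⟩⟩

set_option maxRecDepth 100000 in
lemma exT₁_bridge : ∀ v w, exT₁.Adj v w → ¬ (exT₁ \ fromEdgeSet {s(v,w)}).Reachable v w := by
  decide

set_option maxRecDepth 100000 in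
lemma exT₂_bridge : ∀ v w, exT₂.Adj v w → ¬ (exT₂ \ fromEdgeSet {s(v,w)}).Reachable v w := by
  decide

lemma exT₁_acyclic : exT₁.IsAcyclic := by
  rw [isAcyclic_iff_forall_adj_isBridge]
  intro v w h
  rw [isBridge_iff]
  exact exT₁_bridge v w h

lemma exT₂_acyclic : exT₂.IsAcyclic := by
  rw [isAcyclic_iff_forall_adj_isBridge]
  intro v w h
  rw [isBridge_iff]
  exact exT₂_bridge v w h

lemma exT₁_le : exT₁ ≤ exG := by
  intro a b h
  revert h; revert a b
  decide

lemma exT₂_le : exT₂ ≤ exG := by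
  intro a b h
  revert h; revert a b
  decide

lemma exT₁_leaves : {v : Fin 6 | (exT₁.neighborSet v).ncard = 1} = leafSet exG := by
  rw [leafSet_exG]
  ext v
  simp only [Set.mem_setOf_eq, ncard_eq_degree, Set.mem_insert_iff, Set.mem_singleton_iff]
  revert v; decide

lemma exT₂_leaves : {v : Fin 6 | (exT₂.neighborSet v).ncard = 1} = leafSet exG := by
  rw [leafSet_exG]
  ext v
  simp only [Set.mem_setOf_eq, ncard_eq_degree, Set.mem_insert_iff, Set.mem_singleton_iff]
  revert v; decide

lemma graph_eq_T₁ (T : SimpleGraph (Fin 6)) (hle : T ≤ exG)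
    (h02 : T.Adj 0 2) (h25 : T.Adj 2 5) (h54 : T.Adj 5 4) (h43 : T.Adj 4 3) (h31 : T.Adj 3 1)
    (hn24 : ¬T.Adj 2 4) (hn53 : ¬T.Adj 5 3) : T = exT₁ := by
  ext a b
  fin_cases a <;> fin_cases b <;>
    (constructor <;> intro h) <;>
    first
      | decide
      | exact absurd (hle h) (by decide)
      | exact absurd h (by decide)
      | exact absurd h hn24
      | exact absurd h.symm hn24
      | exact absurd h hn53
      | exact absurd h.symm hn53
      | exact h02 | exact h02.symm | exact h25 | exact h25.symm | exact h54 | exact h54.symm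
      | exact h43 | exact h43.symm | exact h31 | exact h31.symm

lemma graph_eq_T₂ (T : SimpleGraph (Fin 6)) (hle : T ≤ exG)
    (h02 : T.Adj 0 2) (h24 : T.Adj 2 4) (h45 : T.Adj 4 5) (h53 : T.Adj 5 3) (h31 : T.Adj 3 1)
    (hn25 : ¬T.Adj 2 5) (hn43 : ¬T.Adj 4 3) : T = exT₂ := by
  ext a b
  fin_cases a <;> fin_cases b <;>
    (constructor <;> intro h) <;>
    first
      | decide
      | exact absurd (hle h) (by decide)
      | exact absurd h (by decide)
      | exact absurd h hn25
      | exact absurd h.symm hn25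
      | exact absurd h hn43
      | exact absurd h.symm hn43
      | exact h02 | exact h02.symm | exact h24 | exact h24.symm | exact h45 | exact h45.symm
      | exact h53 | exact h53.symm | exact h31 | exact h31.symm

lemma nb4 : ∀ w, exG.Adj 4 w → w = 2 ∨ w = 5 ∨ w = 3 := by decide
lemma nb5 : ∀ w, exG.Adj 5 w → w = 2 ∨ w = 4 ∨ w = 3 := by decide
lemma nb2 : ∀ w, exG.Adj 2 w → w = 0 ∨ w = 4 ∨ w = 5 := by decide
lemma nb0 : ∀ w, exG.Adj 0 w → w = 2 := by decide
lemma nb1 : ∀ w, exG.Adj 1 w → w = 3 := by decide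

lemma not_forestBased : ¬ ForestBasedU exG := by
  rintro ⟨F, hle, hacyc, hdeg, hind⟩
  have hdeg' : ∀ v : Fin 6, (F.neighborSet v).ncard ≤ 1 ↔ (v = 0 ∨ v = 1) := by
    intro v
    have := Set.ext_iff.mp (hdeg.trans leafSet_exG) v
    simpa [Set.mem_insert_iff] using this
  have hnl : ∀ v : Fin 6, v ≠ 0 → v ≠ 1 → ¬ (F.neighborSet v).ncard ≤ 1 := by
    intro v hv0 hv1 h
    rcases (hdeg' v).mp h with rfl | rfl
    · exact hv0 rfl
    · exact hv1 rfl
  have at4 := atLeastTwo F 4 2 5 3 (fun w h => nb4 w (hle h)) (hnl 4 (by decide) (by decide))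
  have at5 := atLeastTwo F 5 2 4 3 (fun w h => nb5 w (hle h)) (hnl 5 (by decide) (by decide))
  by_cases hc : F.Adj 4 5
  · by_cases h42 : F.Adj 4 2 <;> by_cases h52 : F.Adj 5 2
    · exact cycle3 h42.symm hc h52 hacyc
    · exact hind 2 5 (by decide) (fun hh => h52 hh.symm)
        ⟨Walk.cons h42.symm (Walk.cons hc Walk.nil)⟩
    · exact hind 2 4 (by decide) (fun hh => h42 hh.symm)
        ⟨Walk.cons h52.symm (Walk.cons hc.symm Walk.nil)⟩
    · have h43 : F.Adj 4 3 := by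
        rcases at4 with ⟨h, _⟩ | ⟨h, h'⟩ | ⟨_, h'⟩
        · exact absurd h h42
        · exact h'
        · exact h'
      have h53 : F.Adj 5 3 := by
        rcases at5 with ⟨h, _⟩ | ⟨h, h'⟩ | ⟨_, h'⟩
        · exact absurd h h52
        · exact h'
        · exact h'
      exact cycle3 hc h53 h43.symm hacyc
  · have h4 : F.Adj 4 2 ∧ F.Adj 4 3 := by
      rcases at4 with ⟨h, h'⟩ | ⟨h, h'⟩ | ⟨h, h'⟩
      · exact absurd h' hc
      · exact ⟨h, h'⟩
      · exact absurd h hc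
    have h5 : F.Adj 5 2 ∧ F.Adj 5 3 := by
      rcases at5 with ⟨h, h'⟩ | ⟨h, h'⟩ | ⟨h, h'⟩
      · exact absurd h' (fun hh => hc hh.symm)
      · exact ⟨h, h'⟩
      · exact absurd h (fun hh => hc hh.symm)
    exact cycle4 h4.1.symm h4.2 h5.2.symm h5.1 (by decide) (by decide) hacyc

lemma unique_tree : ∀ T : SimpleGraph (Fin 6), T ≤ exG → T.Connected → T.IsAcyclic →
    {v : Fin 6 | (T.neighborSet v).ncard = 1} = leafSet exG →
    T = exT₁ ∨ T = exT₂ := by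
  intro T hle hconn hacyc hleaf
  have hleaf' : ∀ v : Fin 6, (T.neighborSet v).ncard = 1 ↔ (v = 0 ∨ v = 1) := by
    intro v
    have := Set.ext_iff.mp (hleaf.trans leafSet_exG) v
    simpa [Set.mem_insert_iff] using this
  -- pendant edges
  obtain ⟨w0, hw0⟩ := Set.ncard_eq_one.mp ((hleaf' 0).mpr (Or.inl rfl))
  have h0w : T.Adj 0 w0 := by
    rw [← SimpleGraph.mem_neighborSet, hw0]; rfl
  have h02 : T.Adj 0 2 := by
    have := nb0 w0 (hle h0w); rwa [this] at h0w
  obtain ⟨w1, hw1⟩ := Set.ncard_eq_one.mp ((hleaf' 1).mpr (Or.inr rfl))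
  have h1w : T.Adj 1 w1 := by
    rw [← SimpleGraph.mem_neighborSet, hw1]; rfl
  have h31 : T.Adj 3 1 := by
    have := nb1 w1 (hle h1w); rw [this] at h1w; exact h1w.symm
  -- internal vertices have at least two neighbours
  have hnl : ∀ v : Fin 6, v ≠ 0 → v ≠ 1 → ¬ (T.neighborSet v).ncard ≤ 1 := by
    intro v hv0 hv1 h
    have hne : (T.neighborSet v).Nonempty := by
      obtain ⟨w, hw⟩ := exists_adj_of_reachable (hconn.preconnected v 0) hv0
      exact ⟨w, hw⟩
    have hpos : 0 < (T.neighborSet v).ncard := by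
      rw [Set.ncard_pos (Set.toFinite _)]; exact hne
    have hone : (T.neighborSet v).ncard ≠ 1 := by
      intro h1
      rcases (hleaf' v).mp h1 with rfl | rfl
      · exact hv0 rfl
      · exact hv1 rfl
    omega
  have at4 := atLeastTwo T 4 2 5 3 (fun w h => nb4 w (hle h)) (hnl 4 (by decide) (by decide))
  have at5 := atLeastTwo T 5 2 4 3 (fun w h => nb5 w (hle h)) (hnl 5 (by decide) (by decide))
  have at2 := atLeastTwo T 2 0 4 5 (fun w h => nb2 w (hle h)) (hnl 2 (by decide) (by decide))
  by_cases hc : T.Adj 4 5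
  · by_cases ha : T.Adj 2 4 <;> by_cases hb : T.Adj 2 5
    · exact absurd hacyc (cycle3 ha hc hb.symm)
    · -- T = exT₂
      have h53 : T.Adj 5 3 := by
        rcases at5 with ⟨h, _⟩ | ⟨h, h'⟩ | ⟨_, h'⟩
        · exact absurd h.symm hb
        · exact h'
        · exact h'
      have hn43 : ¬ T.Adj 4 3 := fun h43 => cycle3 hc h53 h43.symm hacyc
      exact Or.inr (graph_eq_T₂ T hle h02 ha hc h53 h31 hb hn43)
    · -- T = exT₁
      have h43 : T.Adj 4 3 := by
        rcases at4 with ⟨h, _⟩ | ⟨h, h'⟩ | ⟨_, h'⟩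
        · exact absurd h.symm ha
        · exact h'
        · exact h'
      have hn53 : ¬ T.Adj 5 3 := fun h53 => cycle3 hc h53 h43.symm hacyc
      exact Or.inl (graph_eq_T₁ T hle h02 hb hc.symm h43 h31 ha hn53)
    · rcases at2 with ⟨_, h⟩ | ⟨_, h⟩ | ⟨h, _⟩
      · exact absurd h ha
      · exact absurd h hb
      · exact absurd h ha
  · have h4 : T.Adj 4 2 ∧ T.Adj 4 3 := by
      rcases at4 with ⟨h, h'⟩ | ⟨h, h'⟩ | ⟨h, h'⟩
      · exact absurd h' hc
      · exact ⟨h, h'⟩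
      · exact absurd h hc
    have h5 : T.Adj 5 2 ∧ T.Adj 5 3 := by
      rcases at5 with ⟨h, h'⟩ | ⟨h, h'⟩ | ⟨h, h'⟩
      · exact absurd h' (fun hh => hc hh.symm)
      · exact ⟨h, h'⟩
      · exact absurd h (fun hh => hc hh.symm)
    exact absurd hacyc
      (cycle4 h4.1.symm h4.2 h5.2.symm h5.1 (by decide) (by decide))



/-- The graph `N` with vertex set `{x, y, p, q, u, v}` and
edge set `{xp, pv, pu, uv, uq, vq, qy}` is an unrooted phylogenetic network
with leaf set `{x, y}` that is tree-based but not forest-based: its only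
spanning trees with leaf set `{x, y}` are the paths `x, p, v, u, q, y` and
`x, p, u, v, q, y`, neither of which is an induced path of `N`. -/

theorem example_treeBased_not_forestBased :
    IsUPN exG ∧ leafSet exG = {0, 1} ∧
    TreeBasedU exG ∧ ¬ ForestBasedU exG ∧
    -- the two paths are spanning trees of `exG` with leaf set `{x, y}`
    (exT₁ ≤ exG ∧ exT₁.Connected ∧ exT₁.IsAcyclic ∧
      {v : Fin 6 | (exT₁.neighborSet v).ncard = 1} = leafSet exG) ∧
    (exT₂ ≤ exG ∧ exT₂.Connected ∧ exT₂.IsAcyclic ∧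
      {v : Fin 6 | (exT₂.neighborSet v).ncard = 1} = leafSet exG) ∧
    UPath exG [0, 2, 5, 4, 3, 1] ∧ UPath exG [0, 2, 4, 5, 3, 1] ∧
    -- they are the only such spanning trees
    (∀ T : SimpleGraph (Fin 6), T ≤ exG → T.Connected → T.IsAcyclic →
      {v : Fin 6 | (T.neighborSet v).ncard = 1} = leafSet exG →
      T = exT₁ ∨ T = exT₂) ∧
    -- and neither is an induced path of `exG`
    ¬ UInducedPath exG [0, 2, 5, 4, 3, 1] ∧
    ¬ UInducedPath exG [0, 2, 4, 5, 3, 1] := by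
  refine ⟨⟨exG_conn, ⟨0, ?_⟩, fun v => ?_⟩, leafSet_exG,
    ⟨exT₁, exT₁_le, exT₁_conn, exT₁_acyclic, exT₁_leaves⟩, not_forestBased,
    ⟨exT₁_le, exT₁_conn, exT₁_acyclic, exT₁_leaves⟩,
    ⟨exT₂_le, exT₂_conn, exT₂_acyclic, exT₂_leaves⟩,
    ⟨by decide, by decide, by simp only [List.Chain', List.isChain_cons_cons, List.isChain_singleton]; decide⟩,
    ⟨by decide, by decide, by simp only [List.Chain', List.isChain_cons_cons, List.isChain_singleton]; decide⟩,
    unique_tree, ?_, ?_⟩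
  · rw [leafSet_exG]; left; rfl
  · rw [ncard_eq_degree]; revert v; decide
  · rintro ⟨-, h⟩
    have := h ⟨1, by norm_num⟩ ⟨3, by norm_num⟩ (by decide)
    simp at this
  · rintro ⟨-, h⟩
    have := h ⟨1, by norm_num⟩ ⟨3, by norm_num⟩ (by decide)
    simp at this

end Paper
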